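/- Let A be a finite-dimensional C*-algebra equipped with a faithful positive linear functional φ, and endow A with the inner product ⟨x,y⟩ = φ(x*y), making A a finite-dimensional Hilbert space. Then the multiplication map m: A ⊗ A → A and the unit u: ℂ → A satisfy the Frobenius law: (m ⊗ id) ∘ (id ⊗ m†) = m† ∘ m = (id ⊗ m) ∘ (m† ⊗ id), where daggers denote Hermitian adjoints with respect to this inner product. -/

import Mathlib

open scoped TensorProduct
set_option maxHeartbeats 1000000
set_option synthInstance.maxHeartbeats 200000

/-- The "bra" pairing `⟪c ⊗ d, -⟫` on the algebraic tensor square of a `*`-algebra `A`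
equipped with a linear functional `φ`, where the inner product on `A` is `⟪x, y⟫ = φ(x* y)`.
On a pure tensor `x ⊗ y` it gives `φ(c* x) · φ(d* y)`. -/
noncomputable def braket {A : Type*} [Ring A] [Algebra ℂ A] [StarRing A]
    (φ : A →ₗ[ℂ] ℂ) (c d : A) : A ⊗[ℂ] A →ₗ[ℂ] ℂ :=
  TensorProduct.lift <| (LinearMap.mul ℂ ℂ).compl₁₂
    (φ ∘ₗ LinearMap.mulLeft ℂ (star c)) (φ ∘ₗ LinearMap.mulLeft ℂ (star d))

/-- `δ : A → A ⊗ A` is the Hermitian adjoint `m†` of the multiplication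
`m = LinearMap.mul' ℂ A : A ⊗ A → A` with respect to the inner product `⟪x, y⟫ = φ(x* y)`:
`⟪c ⊗ d, δ a⟫ = ⟪m (c ⊗ d), a⟫ = φ((c·d)* · a)` for all `a, c, d`. -/
def IsComulAdjoint {A : Type*} [Ring A] [Algebra ℂ A] [StarRing A]
    (φ : A →ₗ[ℂ] ℂ) (δ : A →ₗ[ℂ] A ⊗[ℂ] A) : Prop :=
  ∀ a c d : A, braket φ c d (δ a) = φ (star (c * d) * a)

section Aux

variable {A : Type*} [Ring A] [Algebra ℂ A] [StarRing A] (φ : A →ₗ[ℂ] ℂ)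

lemma braket_tmul (c d x y : A) :
    braket φ c d (x ⊗ₜ[ℂ] y) = φ (star c * x) * φ (star d * y) := by
  simp [braket]

/-- The map `c ↦ (x ↦ φ (c * x))`. -/
noncomputable def Tmap : A →ₗ[ℂ] Module.Dual ℂ A :=
  (LinearMap.mul ℂ A).compr₂ φ

lemma Tmap_apply (c x : A) : Tmap φ c x = φ (c * x) := rfl

variable (hfaith : ∀ x : A, x ≠ 0 → φ (star x * x) ≠ 0)

include hfaith in
lemma Tmap_injective : Function.Injective (Tmap φ) := by
  rw [injective_iff_map_eq_zero]
  intro c hc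
  by_contra h
  have h' : star c ≠ 0 := fun hs => h (by simpa using congrArg star hs)
  have := hfaith (star c) h'
  rw [star_star] at this
  exact this (by simpa [Tmap_apply] using congrFun (congrArg DFunLike.coe hc) (star c))

include hfaith in
lemma Tmap_surjective [FiniteDimensional ℂ A] : Function.Surjective (Tmap φ) :=
  (LinearMap.injective_iff_surjective_of_finrank_eq_finrank
    (Subspace.dual_finrank_eq).symm).mp (Tmap_injective φ hfaith)

include hfaith in
lemma separation [FiniteDimensional ℂ A] (t : A ⊗[ℂ] A)
    (h : ∀ c d : A, braket φ c d t = 0) : t = 0 := by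
  rw [← Module.forall_dual_apply_eq_zero_iff ℂ t]
  intro g
  obtain ⟨s, rfl⟩ := (TensorProduct.dualDistribEquiv ℂ A A).surjective g
  induction s using TensorProduct.induction_on with
  | zero => simp
  | add x y hx hy => simp only [map_add, LinearMap.add_apply, hx, hy, add_zero]
  | tmul f g' =>
    obtain ⟨a, rfl⟩ := Tmap_surjective φ hfaith f
    obtain ⟨b, rfl⟩ := Tmap_surjective φ hfaith g'
    have key : (TensorProduct.dualDistribEquiv ℂ A A (Tmap φ a ⊗ₜ Tmap φ b) : A ⊗[ℂ] A →ₗ[ℂ] ℂ)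
        = braket φ (star a) (star b) := by
      apply TensorProduct.ext'
      intro x y
      simp [TensorProduct.dualDistribEquiv, TensorProduct.dualDistrib_apply,
        braket_tmul, Tmap_apply]
    rw [key]
    exact h _ _

lemma L1 (a c d : A) (t : A ⊗[ℂ] A) :
    braket φ c d ((TensorProduct.map (LinearMap.mul' ℂ A) LinearMap.id)
      ((TensorProduct.assoc ℂ A A A).symm (a ⊗ₜ t))) = braket φ (star a * c) d t := by
  induction t using TensorProduct.induction_on with
  | zero => simp
  | add x y hx hy => simp only [TensorProduct.tmul_add, map_add, hx, hy]
  | tmul p q =>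
    simp [TensorProduct.assoc_symm_tmul, braket_tmul, star_mul, star_star, mul_assoc]

lemma L2 (b c e : A) (t : A ⊗[ℂ] A) :
    braket φ c e ((TensorProduct.map LinearMap.id (LinearMap.mul' ℂ A))
      ((TensorProduct.assoc ℂ A A A) (t ⊗ₜ b)))
      = TensorProduct.lift ((LinearMap.mul ℂ ℂ).compl₁₂
          (φ ∘ₗ LinearMap.mulLeft ℂ (star c))
          (φ ∘ₗ (LinearMap.mulRight ℂ b) ∘ₗ LinearMap.mulLeft ℂ (star e))) t := by
  induction t using TensorProduct.induction_on with
  | zero => simp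
  | add x y hx hy => simp only [TensorProduct.add_tmul, map_add, hx, hy]
  | tmul p q =>
    simp [TensorProduct.assoc_tmul, braket_tmul, mul_assoc]

end Aux

/-- Let `A` be a finite-dimensional C*-algebra with a faithful positive
linear functional `φ`, viewed as a Hilbert space via `⟪x,y⟫ = φ(x* y)`.  Then the
multiplication `m : A ⊗ A → A` and its Hermitian adjoint `m† = δ` satisfy the Frobenius law
`(m ⊗ id) ∘ (id ⊗ m†) = m† ∘ m = (id ⊗ m) ∘ (m† ⊗ id)` (with the evident associators). -/
theorem frobenius_law_of_cstar_functional
    {A : Type*} [NormedRing A] [StarRing A] [CStarRing A]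
    [NormedAlgebra ℂ A] [StarModule ℂ A] [FiniteDimensional ℂ A]
    (φ : A →ₗ[ℂ] ℂ)
    (hpos : ∀ x : A, 0 ≤ (φ (star x * x)).re ∧ (φ (star x * x)).im = 0)
    (hfaith : ∀ x : A, x ≠ 0 → φ (star x * x) ≠ 0)
    (δ : A →ₗ[ℂ] A ⊗[ℂ] A) (hδ : IsComulAdjoint φ δ) :
    (TensorProduct.map (LinearMap.mul' ℂ A) LinearMap.id) ∘ₗ
        (TensorProduct.assoc ℂ A A A).symm.toLinearMap ∘ₗ
        (TensorProduct.map LinearMap.id δ) = δ ∘ₗ LinearMap.mul' ℂ A ∧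
    (TensorProduct.map LinearMap.id (LinearMap.mul' ℂ A)) ∘ₗ
        (TensorProduct.assoc ℂ A A A).toLinearMap ∘ₗ
        (TensorProduct.map δ LinearMap.id) = δ ∘ₗ LinearMap.mul' ℂ A := by
  constructor
  · apply TensorProduct.ext'
    intro a b
    have : ∀ c d : A, braket φ c d
        ((TensorProduct.map (LinearMap.mul' ℂ A) LinearMap.id)
          ((TensorProduct.assoc ℂ A A A).symm (a ⊗ₜ δ b)) - δ (a * b)) = 0 := by
      intro c d
      rw [map_sub, L1, hδ, hδ, sub_eq_zero]
      simp [star_mul, star_star, mul_assoc]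
    have h0 := separation φ hfaith _ this
    rw [sub_eq_zero] at h0
    simpa using h0
  · apply TensorProduct.ext'
    intro a b
    have : ∀ c d : A, braket φ c d
        ((TensorProduct.map LinearMap.id (LinearMap.mul' ℂ A))
          ((TensorProduct.assoc ℂ A A A) (δ a ⊗ₜ b)) - δ (a * b)) = 0 := by
      intro c d
      obtain ⟨e', he'⟩ := Tmap_surjective φ hfaith
        (φ ∘ₗ (LinearMap.mulRight ℂ b) ∘ₗ LinearMap.mulLeft ℂ (star d))
      set e := star e' with he
      have heq : ∀ x : A, φ (star e * x) = φ (star d * x * b) := by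
        intro x
        have := congrFun (congrArg DFunLike.coe he') x
        simpa [Tmap_apply, he, star_star, mul_assoc] using this
      rw [map_sub, L2, hδ, sub_eq_zero]
      have key : TensorProduct.lift ((LinearMap.mul ℂ ℂ).compl₁₂
          (φ ∘ₗ LinearMap.mulLeft ℂ (star c))
          (φ ∘ₗ (LinearMap.mulRight ℂ b) ∘ₗ LinearMap.mulLeft ℂ (star d))) (δ a)
          = braket φ c e (δ a) := by
        congr 1
        apply TensorProduct.ext'
        intro x y
        simp [braket, heq y]
      rw [key, hδ]
      have hre : star (c * e) * a = star e * (star c * a) := by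
        simp [star_mul, mul_assoc]
      rw [hre, heq]
      simp [star_mul, mul_assoc]
    have h0 := separation φ hfaith _ this
    rw [sub_eq_zero] at h0
    simpa using h0
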